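/- Let n ≥ 4, let A ∈ ℝ^{2n×n} be a pure common lines matrix associated to rotations R⁽¹⁾,…,R⁽ⁿ⁾ ∈ SO(3), such that all 2×2 determinants det(a_{ij} a_{ik}) for distinct i,j,k are nonzero. Let λ_{ij} (i ≠ j) be nonzero reals with λ_{ij} = λ_{ji} and λ_{i1} = λ_{1j} = 1 for all i,j ≥ 2. Suppose the matrix B obtained from A by scaling block a_{ij} by λ_{ij} has rank 3. Then λ_{ij} = λ_{ik} for all distinct i, j, k ∈ {2,…,n}. -/

import Mathlib

open Matrix

/-- The common-line representative `a_{pq}` of two rotations `P, Q ∈ SO(3)`. -/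
def aVec (P Q : Matrix (Fin 3) (Fin 3) ℝ) : Fin 2 → ℝ :=
  ![P 0 ⬝ᵥ crossProduct (P 2) (Q 2), P 1 ⬝ᵥ crossProduct (P 2) (Q 2)]

/-- Determinant of the `2×2` matrix with columns `u, v`. -/
def det2 (u v : Fin 2 → ℝ) : ℝ := u 0 * v 1 - u 1 * v 0


lemma det2_aVec_eq (P Q S : Matrix (Fin 3) (Fin 3) ℝ) :
    det2 (aVec P Q) (aVec P S) = P.det * (P 2 ⬝ᵥ crossProduct (Q 2) (S 2)) := by
  simp [det2, aVec, crossProduct, dotProduct, Fin.sum_univ_three, Matrix.det_fin_three]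
  ring

lemma det2_aVec_antisym (P Q S : Matrix (Fin 3) (Fin 3) ℝ) (hP : P.det = 1) (hQ : Q.det = 1) :
    det2 (aVec P Q) (aVec P S) = - det2 (aVec Q P) (aVec Q S) := by
  rw [det2_aVec_eq, det2_aVec_eq, hP, hQ]
  simp [crossProduct, dotProduct, Fin.sum_univ_three]
  ring


lemma my_det_fin_four {K : Type*} [CommRing K] (M : Matrix (Fin 4) (Fin 4) K) :
    M.det = M 0 0*M 1 1*M 2 2*M 3 3 - M 0 0*M 1 1*M 2 3*M 3 2 - M 0 0*M 1 2*M 2 1*M 3 3 + M 0 0*M 1 2*M 2 3*M 3 1 + M 0 0*M 1 3*M 2 1*M 3 2 - M 0 0*M 1 3*M 2 2*M 3 1 - M 0 1*M 1 0*M 2 2*M 3 3 + M 0 1*M 1 0*M 2 3*M 3 2 + M 0 1*M 1 2*M 2 0*M 3 3 - M 0 1*M 1 2*M 2 3*M 3 0 - M 0 1*M 1 3*M 2 0*M 3 2 + M 0 1*M 1 3*M 2 2*M 3 0 + M 0 2*M 1 0*M 2 1*M 3 3 - M 0 2*M 1 0*M 2 3*M 3 1 - M 0 2*M 1 1*M 2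 0*M 3 3 + M 0 2*M 1 1*M 2 3*M 3 0 + M 0 2*M 1 3*M 2 0*M 3 1 - M 0 2*M 1 3*M 2 1*M 3 0 - M 0 3*M 1 0*M 2 1*M 3 2 + M 0 3*M 1 0*M 2 2*M 3 1 + M 0 3*M 1 1*M 2 0*M 3 2 - M 0 3*M 1 1*M 2 2*M 3 0 - M 0 3*M 1 2*M 2 0*M 3 1 + M 0 3*M 1 2*M 2 1*M 3 0 := by
  rw [Matrix.det_succ_row_zero]
  simp [Fin.sum_univ_succ, Matrix.det_fin_three, Matrix.submatrix_apply, Fin.succAbove,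
    show (Fin.succ 2 : Fin 4) = 3 from rfl, show (Fin.castSucc 2 : Fin 4) = 2 from rfl,
    show ((1:Fin 4) < 3) from by decide]
  ring

lemma minor_det_zero {m : Type*} [Fintype m] [DecidableEq m] {n : ℕ}
    (B : Matrix m (Fin n) ℝ) (hrank : B.rank = 3)
    (f : Fin 4 → m) (g : Fin 4 → Fin n) :
    (Matrix.of fun a b => B (f a) (g b)).det = 0 := by
  have hcol : ∀ j : Fin n, (fun a => B a j) ∈ LinearMap.range B.mulVecLin := by
    intro j
    exact ⟨Pi.single j 1, by ext a; simp [Matrix.mulVecLin_apply, Matrix.mulVec, dotProduct, Pi.single_apply]⟩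
  have hdep : ¬ LinearIndependent ℝ (fun b : Fin 4 => (fun a => B a (g b)) : Fin 4 → m → ℝ) := by
    intro li
    have li2 : LinearIndependent ℝ (fun b : Fin 4 =>
        (⟨fun a => B a (g b), hcol (g b)⟩ : LinearMap.range B.mulVecLin)) :=
      li.of_comp (LinearMap.range B.mulVecLin).subtype
    have hle := li2.fintype_card_le_finrank
    rw [show Module.finrank ℝ (LinearMap.range B.mulVecLin) = B.rank from rfl, hrank] at hle
    simp at hle
  rw [Fintype.not_linearIndependent_iff] at hdep
  obtain ⟨t, ht, b0, hb0⟩ := hdep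
  rw [← Matrix.exists_mulVec_eq_zero_iff]
  refine ⟨t, fun h => hb0 (by rw [h]; rfl), ?_⟩
  ext a
  have h2 := congrFun ht (f a)
  simpa [Matrix.mulVec, dotProduct, Finset.sum_apply, mul_comm] using h2

/-- Let `n ≥ 4` and `A` the pure common lines matrix of rotations
`R⁽¹⁾,…,R⁽ⁿ⁾ ∈ SO(3)` with all determinants `det(a_{ij} a_{ik})` nonzero. Let
`λ_{ij}` be nonzero symmetric scales with `λ_{i1} = λ_{1j} = 1` (index `0`
playing the role of `1`), and suppose the blockwise-scaled matrix `B` with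
blocks `λ_{ij}a_{ij}` has rank `3`. Then `λ_{ij} = λ_{ik}` for all distinct
`i, j, k ≥ 2`. -/
theorem stmt12 {n : ℕ} (hn : 4 ≤ n) (R : Fin n → Matrix (Fin 3) (Fin 3) ℝ)
    (hR : ∀ i, R i ∈ Matrix.specialOrthogonalGroup (Fin 3) ℝ)
    (hdet : ∀ i j k : Fin n, i ≠ j → i ≠ k → j ≠ k →
      det2 (aVec (R i) (R j)) (aVec (R i) (R k)) ≠ 0)
    (lam : Fin n → Fin n → ℝ)
    (hlam0 : ∀ i j, i ≠ j → lam i j ≠ 0)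
    (hlamsym : ∀ i j, lam i j = lam j i)
    (hlam1 : ∀ i : Fin n, i ≠ (⟨0, by omega⟩ : Fin n) → lam i ⟨0, by omega⟩ = 1 ∧ lam ⟨0, by omega⟩ i = 1)
    (B : Matrix (Fin n × Fin 2) (Fin n) ℝ)
    (hB : ∀ (p : Fin n × Fin 2) (j : Fin n),
      B p j = if p.1 = j then 0 else lam p.1 j * aVec (R p.1) (R j) p.2)
    (hrank : B.rank = 3) :
    ∀ i j k : Fin n, i ≠ (⟨0, by omega⟩ : Fin n) → j ≠ (⟨0, by omega⟩ : Fin n) → k ≠ (⟨0, by omega⟩ : Fin n) → i ≠ j → i ≠ k → j ≠ k →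
      lam i j = lam i k := by
  have hdet1 : ∀ i, (R i).det = 1 := fun i =>
    ((Matrix.mem_specialOrthogonalGroup_iff.mp (hR i)).2)
  set z : Fin n := ⟨0, by omega⟩ with hz
  -- key step : for distinct i j k all ≠ z, lam i k = lam j k
  have key : ∀ i j k : Fin n, i ≠ z → j ≠ z → k ≠ z → i ≠ j → i ≠ k → j ≠ k →
      lam i k = lam j k := by
    intro i j k hi hj hk hij hik hjk
    have hD := minor_det_zero B hrank ![(i,0),(i,1),(j,0),(j,1)] ![i, j, k, z]
    rw [my_det_fin_four] at hD
    simp only [Matrix.of_apply, Matrix.cons_val', Matrix.cons_val_zero, Matrix.cons_val_one,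
      Matrix.head_cons, Matrix.cons_val_two, Matrix.tail_cons, Matrix.cons_val_three,
      Matrix.head_fin_const, Matrix.cons_val_fin_one, hB] at hD
    simp only [if_pos rfl, ite_true, if_neg hij, if_neg hik, if_neg hi, if_neg hij.symm,
      if_neg hjk, if_neg hj, one_mul, zero_mul, mul_zero] at hD
    have h1 : det2 (aVec (R i) (R j)) (aVec (R i) (R k))
        = - det2 (aVec (R j) (R i)) (aVec (R j) (R k)) :=
      det2_aVec_antisym _ _ _ (hdet1 i) (hdet1 j)
    have h2 : det2 (aVec (R i) (R j)) (aVec (R i) (R z))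
        = - det2 (aVec (R j) (R i)) (aVec (R j) (R z)) :=
      det2_aVec_antisym _ _ _ (hdet1 i) (hdet1 j)
    have hiz := (hlam1 i hi).1
    have hjz := (hlam1 j hj).1
    have hC : det2 (aVec (R i) (R j)) (aVec (R i) (R k)) ≠ 0 := hdet i j k hij hik hjk
    have hE : det2 (aVec (R i) (R j)) (aVec (R i) (R z)) ≠ 0 := hdet i j z hij hi hj
    have hprod : (lam i k - lam j k) * (lam i j * lam j i *
        det2 (aVec (R i) (R j)) (aVec (R i) (R k)) *
        det2 (aVec (R i) (R j)) (aVec (R i) (R z))) = 0 := by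
      simp only [det2] at h1 h2 ⊢
      rw [hiz, hjz] at hD
      simp only [hij, ↓reduceIte] at hD
      linear_combination (-1 : ℝ) * hD
        + (lam i j * lam j i * lam i k *
            (aVec (R i) (R j) 0 * aVec (R i) (R k) 1 - aVec (R i) (R j) 1 * aVec (R i) (R k) 0)) * h2
        - (lam i j * lam j i * lam j k *
            (aVec (R i) (R j) 0 * aVec (R i) (R z) 1 - aVec (R i) (R j) 1 * aVec (R i) (R z) 0)) * h1
    rcases mul_eq_zero.mp hprod with h | h
    · linarith
    · exfalso
      exact (mul_ne_zero (mul_ne_zero (mul_ne_zero (hlam0 i j hij) (hlam0 j i hij.symm)) hC) hE) h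
  intro i j k hi hj hk hij hik hjk
  calc lam i j = lam k j := key i k j hi hk hj hik hij hjk.symm
    _ = lam j k := hlamsym k j
    _ = lam i k := key j i k hj hi hk hij.symm hjk hik
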